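/- For the recursively defined rooted trees T̂_i, the total acquisition number satisfies a_t(T̂_i) = 1 for all i ≥ 0; in fact, there is an acquisition protocol moving all 2^i units of weight onto the root. -/

import Mathlib

/-- A total acquisition move: all the weight of `u` is moved to an adjacent
vertex `v`, provided `v` carries at least as much weight as `u`. -/
def AcqMove {V : Type*} [DecidableEq V] (G : SimpleGraph V) (w w' : V → ℕ) : Prop :=
  ∃ u v, G.Adj u v ∧ 0 < w u ∧ w u ≤ w v ∧
    w' = Function.update (Function.update w v (w v + w u)) u 0

/-- Reachability by a finite sequence of total acquisition moves. -/
def AcqReach {V : Type*} [DecidableEq V] (G : SimpleGraph V) : (V → ℕ) → (V → ℕ) → Prop :=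
  Relation.ReflTransGen (AcqMove G)

/-- No total acquisition move is available from `w`. -/
def AcqMaximal {V : Type*} [DecidableEq V] (G : SimpleGraph V) (w : V → ℕ) : Prop :=
  ∀ w', ¬ AcqMove G w w'

/-- The total acquisition number: minimum number of vertices with positive
weight after a maximal sequence of total acquisition moves starting from the
all-ones weight function. -/
noncomputable def totalAcq {V : Type*} [DecidableEq V] (G : SimpleGraph V) : ℕ :=
  sInf { m | ∃ w, AcqReach G (fun _ => 1) w ∧ AcqMaximal G w ∧
    m = {v | 0 < w v}.ncard }


/-- The recursively defined rooted tree `T̂_d`, encoded on vertex set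
`Finset (Fin d)`: the root is `∅`, and the children of a vertex `s` are the
sets `insert a s` with `a` smaller than every element of `s` (so the parent of
a nonempty vertex `t` is obtained by erasing its minimum).  The root `∅` thus
has children `{0}, {1}, …, {d-1}`, and `{j}` is the root of a copy of `T̂_j`,
exactly as in the recursive definition. -/
def hatT (d : ℕ) : SimpleGraph (Finset (Fin d)) where
  Adj s t :=
    (∃ a ∈ t, s = t.erase a ∧ ∀ b ∈ s, a < b) ∨
    (∃ a ∈ s, t = s.erase a ∧ ∀ b ∈ t, a < b)
  symm := ⟨fun s t h => Or.symm h⟩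
  loopless := ⟨by
    intro s h
    rcases h with ⟨a, ha, hs, _⟩ | ⟨a, ha, hs, _⟩ <;> rw [hs] at ha <;>
      exact Finset.notMem_erase _ _ ha⟩

/-- The number of vertices of `T̂_i`: the root together with one copy each of
`T̂_0, …, T̂_{i-1}`. -/
def hatTCard : (i : ℕ) → ℕ
  | i => 1 + ∑ j : Fin i, hatTCard j
  decreasing_by exact j.isLt

/-- `a_t(T̂_i) = 1`; in fact there is an acquisition protocol moving all
`2 ^ i` units of weight onto the root `∅`. -/
def acqW (i m : ℕ) : Finset (Fin i) → ℕ :=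
  fun s => if ∀ a ∈ s, m ≤ (a : ℕ) then 2 ^ m else 0

def acqP (i : ℕ) (m : Fin i) : Finset (Fin i) → Prop :=
  fun s => ∀ a ∈ s, (m : ℕ) < (a : ℕ)

instance (i : ℕ) (m : Fin i) : DecidablePred (acqP i m) := fun s =>
  inferInstanceAs (Decidable (∀ a ∈ s, (m : ℕ) < (a : ℕ)))

def acqF (i : ℕ) (m : Fin i) : Finset (Finset (Fin i)) :=
  Finset.univ.filter (acqP i m)

lemma mem_acqF {i : ℕ} {m : Fin i} {s : Finset (Fin i)} :
    s ∈ acqF i m ↔ ∀ a ∈ s, (m : ℕ) < (a : ℕ) := by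
  simp [acqF, acqP]

def acqWmid (i : ℕ) (m : Fin i) (S : Finset (Finset (Fin i))) : Finset (Fin i) → ℕ :=
  fun s =>
    if ∀ a ∈ s, (m : ℕ) < (a : ℕ) then (if s ∈ S then 2 ^ ((m : ℕ) + 1) else 2 ^ (m : ℕ))
    else if m ∈ s ∧ ∀ a ∈ s, (m : ℕ) ≤ (a : ℕ) then
      (if s.erase m ∈ S then 0 else 2 ^ (m : ℕ))
    else 0

lemma acqWmid_empty (i : ℕ) (m : Fin i) : acqWmid i m ∅ = acqW i (m : ℕ) := by
  funext s
  simp only [acqWmid, acqW, Finset.notMem_empty, if_false]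
  by_cases h1 : ∀ a ∈ s, (m : ℕ) < (a : ℕ)
  · rw [if_pos h1, if_pos (fun a ha => le_of_lt (h1 a ha))]
  · rw [if_neg h1]
    by_cases h2 : m ∈ s ∧ ∀ a ∈ s, (m : ℕ) ≤ (a : ℕ)
    · rw [if_pos h2, if_pos h2.2]
    · rw [if_neg h2, if_neg]
      intro h3
      push_neg at h1
      obtain ⟨a, ha, hla⟩ := h1
      have : a = m := Fin.ext (le_antisymm hla (h3 a ha))
      exact h2 ⟨this ▸ ha, h3⟩

lemma acqWmid_full (i : ℕ) (m : Fin i) :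
    acqWmid i m (acqF i m) = acqW i ((m : ℕ) + 1) := by
  funext s
  have e1 : (∀ a ∈ s, (m : ℕ) < (a : ℕ)) ↔ (∀ a ∈ s, (m : ℕ) + 1 ≤ (a : ℕ)) :=
    ⟨fun h a ha => h a ha, fun h a ha => h a ha⟩
  simp only [acqWmid, acqW]
  by_cases h1 : ∀ a ∈ s, (m : ℕ) < (a : ℕ)
  · have hF : s ∈ acqF i m := mem_acqF.mpr h1
    rw [if_pos h1, if_pos hF, if_pos (e1.mp h1)]
  · rw [if_neg h1, if_neg (fun h3 => h1 (e1.mpr h3))]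
    by_cases h2 : m ∈ s ∧ ∀ a ∈ s, (m : ℕ) ≤ (a : ℕ)
    · have hE : s.erase m ∈ acqF i m := by
        refine mem_acqF.mpr (fun a ha => ?_)
        have ham : a ≠ m := (Finset.mem_erase.mp ha).1
        exact lt_of_le_of_ne (h2.2 a (Finset.mem_of_mem_erase ha))
          (fun h => ham (Fin.ext h.symm))
      rw [if_pos h2, if_pos hE]
    · rw [if_neg h2]

lemma acq_move_mid (i : ℕ) (m : Fin i) (S : Finset (Finset (Fin i)))
    (t : Finset (Fin i)) (ht : ∀ a ∈ t, (m : ℕ) < (a : ℕ)) (htS : t ∉ S) :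
    AcqMove (hatT i) (acqWmid i m S) (acqWmid i m (insert t S)) := by
  have hmt : m ∉ t := fun h => lt_irrefl _ (ht m h)
  have herase : (insert m t).erase m = t := Finset.erase_insert hmt
  have hu : acqWmid i m S (insert m t) = 2 ^ (m : ℕ) := by
    simp only [acqWmid]
    rw [if_neg, if_pos, herase, if_neg htS]
    · exact ⟨Finset.mem_insert_self _ _, fun a ha => by
        rcases Finset.mem_insert.mp ha with h | h
        · exact h ▸ le_rfl
        · exact le_of_lt (ht a h)⟩
    · exact fun h => lt_irrefl _ (h m (Finset.mem_insert_self _ _))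
  have hv : acqWmid i m S t = 2 ^ (m : ℕ) := by
    simp only [acqWmid]
    rw [if_pos ht, if_neg htS]
  refine ⟨insert m t, t, ?_, ?_, ?_, ?_⟩
  · exact Or.inr ⟨m, Finset.mem_insert_self _ _, herase.symm, fun b hb => ht b hb⟩
  · rw [hu]; positivity
  · rw [hu, hv]
  · funext s
    by_cases hs1 : s = insert m t
    · subst hs1
      rw [Function.update_self]
      simp only [acqWmid]
      rw [if_neg, if_pos, herase, if_pos (Finset.mem_insert_self _ _)]
      · exact ⟨Finset.mem_insert_self _ _, fun a ha => by
          rcases Finset.mem_insert.mp ha with h | h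
          · exact h ▸ le_rfl
          · exact le_of_lt (ht a h)⟩
      · exact fun h => lt_irrefl _ (h m (Finset.mem_insert_self _ _))
    · rw [Function.update_of_ne hs1]
      by_cases hs2 : s = t
      · subst hs2
        rw [Function.update_self, hv, hu]
        simp only [acqWmid]
        rw [if_pos ht, if_pos (Finset.mem_insert_self _ _)]
        ring
      · rw [Function.update_of_ne hs2]
        simp only [acqWmid]
        by_cases h1 : ∀ a ∈ s, (m : ℕ) < (a : ℕ)
        · rw [if_pos h1, if_pos h1]
          simp only [Finset.mem_insert, or_iff_right hs2]
        · rw [if_neg h1, if_neg h1]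
          by_cases h2 : m ∈ s ∧ ∀ a ∈ s, (m : ℕ) ≤ (a : ℕ)
          · rw [if_pos h2, if_pos h2]
            have hnet : s.erase m ≠ t := by
              intro h
              apply hs1
              rw [← Finset.insert_erase h2.1, h]
            simp only [Finset.mem_insert, or_iff_right hnet]
          · rw [if_neg h2, if_neg h2]

lemma acq_reach_mid (i : ℕ) (m : Fin i) (S : Finset (Finset (Fin i)))
    (hS : ∀ s ∈ S, ∀ a ∈ s, (m : ℕ) < (a : ℕ)) :
    AcqReach (hatT i) (acqWmid i m ∅) (acqWmid i m S) := by
  classical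
  induction S using Finset.induction with
  | empty => exact Relation.ReflTransGen.refl
  | @insert t S htS ih =>
    exact Relation.ReflTransGen.tail
      (ih fun s hs => hS s (Finset.mem_insert_of_mem hs))
      (acq_move_mid i m S t (hS t (Finset.mem_insert_self _ _)) htS)

lemma acq_reach_W (i : ℕ) : ∀ m, m ≤ i → AcqReach (hatT i) (fun _ => 1) (acqW i m) := by
  intro m
  induction m with
  | zero =>
    intro _
    have : acqW i 0 = fun _ => 1 := funext fun s => if_pos (fun a _ => Nat.zero_le _)
    rw [this]
    exact Relation.ReflTransGen.refl
  | succ m ih =>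
    intro hmi
    have hm : m < i := hmi
    refine Relation.ReflTransGen.trans (ih (le_of_lt hm)) ?_
    have h1 : acqW i m = acqWmid i ⟨m, hm⟩ ∅ := (acqWmid_empty i ⟨m, hm⟩).symm
    have h2 : acqW i (m + 1) = acqWmid i ⟨m, hm⟩ (acqF i ⟨m, hm⟩) :=
      (acqWmid_full i ⟨m, hm⟩).symm
    rw [h1, h2]
    exact acq_reach_mid i ⟨m, hm⟩ _ (fun s hs => mem_acqF.mp hs)

lemma acq_sum_move {V : Type*} [DecidableEq V] [Fintype V] {G : SimpleGraph V}
    {w w' : V → ℕ} (h : AcqMove G w w') : ∑ v, w' v = ∑ v, w v := by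
  obtain ⟨u, v, hadj, hu, huv, rfl⟩ := h
  have hne : v ≠ u := fun h => hadj.ne h.symm
  rw [Finset.sum_update_of_mem (Finset.mem_univ u), ← Finset.erase_eq,
    Finset.sum_update_of_mem (Finset.mem_erase.mpr ⟨hne, Finset.mem_univ v⟩),
    ← Finset.erase_eq]
  rw [← Finset.add_sum_erase _ w (Finset.mem_univ u),
    ← Finset.add_sum_erase _ w (Finset.mem_erase.mpr ⟨hne, Finset.mem_univ v⟩)]
  omega

lemma acq_sum_reach {V : Type*} [DecidableEq V] [Fintype V] {G : SimpleGraph V}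
    {w w' : V → ℕ} (h : AcqReach G w w') : ∑ v, w' v = ∑ v, w v := by
  induction h with
  | refl => rfl
  | tail _ hmov ih => rw [acq_sum_move hmov, ih]

lemma acqW_top (i : ℕ) : ∀ s : Finset (Fin i), acqW i i s = if s = ∅ then 2 ^ i else 0 := by
  intro s
  rcases eq_or_ne s (∅ : Finset (Fin i)) with h | h
  · subst h
    rw [if_pos rfl, acqW, if_pos (fun a ha => absurd ha (Finset.notMem_empty a))]
  · rw [if_neg h, acqW, if_neg]
    intro h3
    obtain ⟨a, ha⟩ := Finset.nonempty_iff_ne_empty.mpr h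
    exact absurd (h3 a ha) (not_le.mpr a.isLt)

lemma acq_maximal_top (i : ℕ) : AcqMaximal (hatT i) (acqW i i) := by
  intro w' ⟨u, v, hadj, hu, huv, _⟩
  rw [acqW_top] at hu huv
  by_cases h : u = ∅
  · subst h
    rw [if_pos rfl] at hu huv
    rcases eq_or_ne v (∅ : Finset (Fin i)) with hv | hv
    · subst hv
      exact (hatT i).loopless.irrefl ∅ hadj
    · rw [acqW_top, if_neg hv] at huv
      omega
  · rw [if_neg h] at hu
    exact absurd hu (lt_irrefl 0)

theorem totalAcq_hatT (i : ℕ) :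
    totalAcq (hatT i) = 1 ∧
    ∃ w : Finset (Fin i) → ℕ,
      AcqReach (hatT i) (fun _ => 1) w ∧
      w ∅ = 2 ^ i ∧ ∀ s, s ≠ ∅ → w s = 0 := by
  have hreach : AcqReach (hatT i) (fun _ => 1) (acqW i i) := acq_reach_W i i le_rfl
  have hval := acqW_top i
  constructor
  · have h1 : (1 : ℕ) ∈ { m | ∃ w, AcqReach (hatT i) (fun _ => 1) w ∧ AcqMaximal (hatT i) w ∧
        m = {v | 0 < w v}.ncard } := by
      refine ⟨acqW i i, hreach, acq_maximal_top i, ?_⟩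
      have : {v | 0 < acqW i i v} = {(∅ : Finset (Fin i))} := by
        ext s
        simp only [Set.mem_setOf_eq, Set.mem_singleton_iff, hval s]
        rcases eq_or_ne s (∅ : Finset (Fin i)) with h | h
        · simp [h, Nat.pow_pos]
        · simp [h]
      rw [this, Set.ncard_singleton]
    refine le_antisymm (Nat.sInf_le h1) ?_
    rcases Nat.eq_zero_or_pos (sInf { m | ∃ w, AcqReach (hatT i) (fun _ => 1) w ∧
        AcqMaximal (hatT i) w ∧ m = {v | 0 < w v}.ncard }) with h0 | hp
    · exfalso
      have hmem := Nat.sInf_mem (Set.nonempty_of_mem h1)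
      rw [h0] at hmem
      obtain ⟨w, hw, _, hcard⟩ := hmem
      have hsum : ∑ v, w v = ∑ v : Finset (Fin i), 1 := acq_sum_reach hw
      have hpos : ∃ v, 0 < w v := by
        by_contra hno
        push_neg at hno
        have : ∀ v, w v = 0 := fun v => Nat.le_zero.mp (hno v)
        simp only [this, Finset.sum_const_zero] at hsum
        have : (0 : ℕ) < ∑ v : Finset (Fin i), 1 := by
          rw [Finset.sum_const, smul_eq_mul, mul_one]
          exact Finset.card_pos.mpr ⟨∅, Finset.mem_univ _⟩
        exact this.ne' hsum.symm
      obtain ⟨v, hv⟩ := hpos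
      have : 0 < {v | 0 < w v}.ncard :=
        (Set.ncard_pos (Set.toFinite _)).mpr ⟨v, hv⟩
      exact this.ne' hcard.symm
    · exact hp
  · exact ⟨acqW i i, hreach, by rw [hval]; simp, fun s hs => by rw [hval, if_neg hs]⟩
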